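/- Let G be a finite metabelian 2-group with G/G' ≅ Z/2 × Z/2^m, generated by a, b with a^2, b^(2^m) ∈ G'. Let H = ⟨b, G'⟩ be a maximal subgroup with H/G' cyclic, and suppose the index (G' : H') = 2^κ. Then G' contains an element of order at least 2^κ; in fact the commutator c_2 = [a,b] has order at least 2^κ. -/

import Mathlib

open scoped Pointwise

open scoped commutatorElement

/-- A group generated by two commuting elements is commutative. -/
lemma aux_comm_of_two_gen {Γ : Type*} [Group Γ] {x y : Γ} (hxy : Commute x y)
    (hgen : Subgroup.closure {x, y} = ⊤) : ∀ u v : Γ, Commute u v := by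
  have hcent : ∀ z : Γ, z ∈ Subgroup.centralizer {x, y} := by
    intro z
    have hle : Subgroup.closure {x, y} ≤ Subgroup.centralizer {x, y} := by
      rw [Subgroup.closure_le]
      intro w hw
      rw [SetLike.mem_coe, Subgroup.mem_centralizer_iff]
      intro u hu
      rcases hw with hw | hw <;> rcases hu with hu | hu <;> subst hw <;> subst hu
      · rfl
      · exact hxy.eq.symm
      · exact hxy.eq
      · rfl
    exact hle (hgen ▸ Subgroup.mem_top z)
  have hcen : ∀ z : Γ, z ∈ Subgroup.center Γ := by
    intro z
    have hle : Subgroup.closure {x, y} ≤ Subgroup.center Γ := by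
      rw [Subgroup.closure_le]
      intro w hw
      rw [SetLike.mem_coe, Subgroup.mem_center_iff]
      intro g
      exact ((Subgroup.mem_centralizer_iff.mp (hcent g)) w hw).symm
    exact hle (hgen ▸ Subgroup.mem_top z)
  intro u v
  exact ((Subgroup.mem_center_iff.mp (hcen u)) v).symm

/-- Lemma 2: metabelian 2-group `G` with `G/G' ≃ (2, 2^m)`, `H = ⟨b⟩G'` with
`(G' : H') = 2^κ`; then `G'` contains an element of order at least `2^κ`,
in fact `c₂ = [a,b]` has order at least `2^κ`. -/
theorem stmt1 (m κ : ℕ) (hm : 2 ≤ m) (G : Type*) [Group G] [Finite G]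
    (hG : IsPGroup 2 G)
    (hmeta : ∀ x y : G, x ∈ commutator G → y ∈ commutator G → Commute x y)
    (a b : G) (hgen : Subgroup.closure {a, b} = ⊤)
    (habel : Nonempty ((G ⧸ commutator G) ≃* Multiplicative (ZMod 2 × ZMod (2 ^ m))))
    (ha : a ^ 2 ∈ commutator G) (hb : b ^ (2 ^ m) ∈ commutator G)
    (H : Subgroup G) (hH : H = Subgroup.closure {b} ⊔ commutator G)
    (hHmax : H.index = 2)
    (hκ : ((⁅H, H⁆ : Subgroup G).subgroupOf (commutator G)).index = 2 ^ κ) :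
    (∃ g ∈ commutator G, 2 ^ κ ≤ orderOf g) ∧ 2 ^ κ ≤ orderOf ⁅a, b⁆ := by
  classical
  set c : G := ⁅a, b⁆ with hc
  have hKH : commutator G ≤ H := hH ▸ le_sup_right
  have hbH : b ∈ H := hH ▸ Subgroup.mem_sup_left (Subgroup.subset_closure rfl)
  have hcK : c ∈ commutator G :=
    Subgroup.commutator_mem_commutator (Subgroup.mem_top a) (Subgroup.mem_top b)
  have hH'K : (⁅H, H⁆ : Subgroup G) ≤ commutator G :=
    Subgroup.commutator_mono le_top le_top
  -- H is normal
  have hHnormal : H.Normal := by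
    constructor
    intro n hn g
    have h1 : ⁅g, n⁆ ∈ commutator G :=
      Subgroup.commutator_mem_commutator (Subgroup.mem_top g) (Subgroup.mem_top n)
    have h2 : g * n * g⁻¹ = ⁅g, n⁆ * n := by group
    rw [h2]; exact H.mul_mem (hKH h1) hn
  have hH'normal : (⁅H, H⁆ : Subgroup G).Normal := Subgroup.commutator_normal H H
  set N : Subgroup G := Subgroup.closure {c} ⊔ ⁅H, H⁆ with hNdef
  have hcN : c ∈ N := Subgroup.mem_sup_left (Subgroup.subset_closure rfl)
  -- N is normal in G
  have hNnormal : N.Normal := by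
    rw [← Subgroup.normalizer_eq_top_iff, ← top_le_iff, ← hgen, Subgroup.closure_le]
    have key : ∀ x : G, x * c * x⁻¹ ∈ N → x ∈ Subgroup.normalizer (N : Set G) := by
      intro x hx
      apply Subgroup.mem_normalizer_fintype
      intro n hn
      have hle : N ≤ N.comap (MulAut.conj x).toMonoidHom := by
        rw [hNdef]
        apply sup_le
        · rw [Subgroup.closure_le]
          rintro w rfl
          simpa using hx
        · intro h hh
          simp only [Subgroup.mem_comap, MulEquiv.coe_toMonoidHom, MulAut.conj_apply]
          exact Subgroup.mem_sup_right (hH'normal.conj_mem h hh x)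
      simpa using hle hn
    rintro x (rfl | rfl)
    · apply key
      have h1 : x * c * x⁻¹ = ⁅x * x, b⁆ * c⁻¹ := by
        rw [hc]
        simp only [commutatorElement_def, mul_inv_rev, inv_inv]
        group
      have hxx : x * x ∈ commutator G := by rw [← pow_two]; exact ha
      rw [h1]
      exact N.mul_mem
        (Subgroup.mem_sup_right (Subgroup.commutator_mem_commutator (hKH hxx) hbH))
        (N.inv_mem hcN)
    · apply key
      have h1 : x * c * x⁻¹ = ⁅x, c⁆ * c := by group
      rw [h1]
      exact N.mul_mem
        (Subgroup.mem_sup_right (Subgroup.commutator_mem_commutator hbH (hKH hcK)))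
        hcN
  -- commutator G = N
  have hNK : N = commutator G := by
    apply le_antisymm
    · exact sup_le (by rw [Subgroup.closure_le]; rintro w rfl; exact hcK) hH'K
    · have hmkc : QuotientGroup.mk' N c = 1 := (QuotientGroup.eq_one_iff c).mpr hcN
      have hcomm : Commute (QuotientGroup.mk' N a) (QuotientGroup.mk' N b) := by
        rw [← commutatorElement_eq_one_iff_commute, ← map_commutatorElement]
        exact hmkc
      have hgenQ : Subgroup.closure {QuotientGroup.mk' N a, QuotientGroup.mk' N b} = ⊤ := by
        have := Subgroup.map_top_of_surjective (QuotientGroup.mk' N)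
          (QuotientGroup.mk'_surjective N)
        rw [← hgen, MonoidHom.map_closure, Set.image_insert_eq, Set.image_singleton] at this
        exact this
      have hQcomm := aux_comm_of_two_gen hcomm hgenQ
      rw [commutator_def, Subgroup.commutator_le]
      intro g₁ _ g₂ _
      rw [← QuotientGroup.eq_one_iff, ← QuotientGroup.coe_mk', map_commutatorElement]
      exact commutatorElement_eq_one_iff_commute.mpr (hQcomm _ _)
  -- the quotient (commutator G) / H'
  set N' : Subgroup (commutator G) := (⁅H, H⁆ : Subgroup G).subgroupOf (commutator G) with hN'
  have hN'normal : N'.Normal := by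
    constructor
    intro n hn g
    have heq : g * n * g⁻¹ = n := by
      ext
      push_cast
      rw [(hmeta _ _ g.2 n.2).eq, mul_inv_cancel_right]
    rw [heq]; exact hn
  set c₀ : commutator G := ⟨c, hcK⟩ with hc₀
  have hzp : Subgroup.zpowers (QuotientGroup.mk' N' c₀) = ⊤ := by
    rw [eq_top_iff]
    intro q _
    obtain ⟨g, rfl⟩ := QuotientGroup.mk'_surjective N' q
    have hg : (g : G) ∈ N := by rw [hNK]; exact g.2
    rw [hNdef] at hg
    have hg' : (g : G) ∈ (↑(Subgroup.closure {c}) * ↑(⁅H, H⁆ : Subgroup G) : Set G) := by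
      rwa [← Subgroup.mul_normal]
    obtain ⟨x, hx, h, hh, hxh⟩ := Set.mem_mul.mp hg'
    rw [← Subgroup.zpowers_eq_closure] at hx
    obtain ⟨n, rfl⟩ := hx
    have hhK : h ∈ commutator G := hH'K hh
    have hgeq : g = c₀ ^ n * ⟨h, hhK⟩ := by
      ext
      push_cast
      exact hxh.symm
    have hmkh : QuotientGroup.mk' N' (⟨h, hhK⟩ : commutator G) = 1 :=
      (QuotientGroup.eq_one_iff _).mpr (Subgroup.mem_subgroupOf.mpr hh)
    refine ⟨n, ?_⟩
    rw [hgeq, map_mul, map_zpow, hmkh, mul_one]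
  have hord : orderOf (QuotientGroup.mk' N' c₀) = 2 ^ κ := by
    rw [← Nat.card_zpowers, hzp, Subgroup.card_top, ← hκ]
    rfl
  have hdvd : (2 : ℕ) ^ κ ∣ orderOf c₀ := by
    rw [← hord]
    exact orderOf_map_dvd (QuotientGroup.mk' N') c₀
  have hordc : orderOf c₀ = orderOf c := Subgroup.orderOf_mk c hcK
  have hfin : (2 : ℕ) ^ κ ≤ orderOf c := by
    refine Nat.le_of_dvd (orderOf_pos c) ?_
    rwa [← hordc]
  exact ⟨⟨c, hcK, hfin⟩, hfin⟩
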